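/- With Q and Q_m as above, for any m ≤ l the operator Q_l^{-1} (Q_m ⊗ Q_{l−m}), viewed as a map from H_m ⊗ H_{l−m} to H_l after composing with the projection, equals the orthogonal projection p_l : H_m ⊗ H_{l−m} → H_l. That is, Q_l^{-1} p_l (Q_m ⊗ Q_{l−m}) = p_l on H_m ⊗ H_{l−m}. -/

import Mathlib

open scoped Matrix

noncomputable section

/-- Words of length `m` in the alphabet `{1,…,n}`. -/
abbrev Wd (n m : ℕ) := Fin m → Fin n

/-- The `m`-th full tensor power `H^{⊗m}` of `H = ℂ^n`, realized as the Euclidean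
space with orthonormal basis indexed by words of length `m`. -/
abbrev TP (n m : ℕ) : Type := EuclideanSpace ℂ (Wd n m)

variable {n : ℕ}

/-- Continuous linear map associated to a (possibly rectangular) matrix. -/
def ofMatR {ι κ : Type} [Fintype ι] [Fintype κ] [DecidableEq ι] [DecidableEq κ]
    (M : Matrix ι κ ℂ) : EuclideanSpace ℂ κ →L[ℂ] EuclideanSpace ℂ ι :=
  LinearMap.toContinuousLinearMap (Matrix.toEuclideanLin M)

/-- Matrix entry of an operator in the standard basis. -/
def ent {a : ℕ} (A : TP n a →L[ℂ] TP n a) (w v : Wd n a) : ℂ :=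
  A (EuclideanSpace.single v 1) w

def wfst {m k : ℕ} (w : Wd n (m + k)) : Wd n m := fun i => w (Fin.castAdd k i)
def wsnd {m k : ℕ} (w : Wd n (m + k)) : Wd n k := fun i => w (Fin.natAdd m i)

/-- Tensor product of vectors, under the identification `H^{⊗m} ⊗ H^{⊗k} = H^{⊗(m+k)}`. -/
def tmul {m k : ℕ} (x : TP n m) (y : TP n k) : TP n (m + k) :=
  (WithLp.equiv 2 _).symm (fun w => x (wfst w) * y (wsnd w))

/-- Tensor product of subspaces `K ⊗ L ⊆ H^{⊗(m+k)}`. -/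
def tensorSub {m k : ℕ} (K : Submodule ℂ (TP n m)) (L : Submodule ℂ (TP n k)) :
    Submodule ℂ (TP n (m + k)) :=
  Submodule.span ℂ {z | ∃ x ∈ K, ∃ y ∈ L, z = tmul x y}

/-- Tensor product of operators, under `H^{⊗m} ⊗ H^{⊗k} = H^{⊗(m+k)}`. -/
def opT {m k : ℕ} (A : TP n m →L[ℂ] TP n m) (B : TP n k →L[ℂ] TP n k) :
    TP n (m + k) →L[ℂ] TP n (m + k) :=
  ofMatR (Matrix.of fun w v => ent A (wfst w) (wfst v) * ent B (wsnd w) (wsnd v))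

/-- A subproduct system: `H_0 = ℂ` and `H_{m+k} ⊆ H_m ⊗ H_k`. -/
def IsSubproduct (H : ∀ m, Submodule ℂ (TP n m)) : Prop :=
  H 0 = ⊤ ∧ ∀ m k, H (m + k) ≤ tensorSub (H m) (H k)

/-- The orthogonal projection `p_m : H^{⊗m} → H_m` (as an operator on `H^{⊗m}`). -/
def prj (H : ∀ m, Submodule ℂ (TP n m)) (m : ℕ) : TP n m →L[ℂ] TP n m :=
  (H m).subtypeL ∘L (H m).orthogonalProjectionOnto

/-- Left creation operator `x ↦ e_j ⊗ x`. -/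
def lcreate (j : Fin n) (m : ℕ) : TP n m →L[ℂ] TP n (m + 1) :=
  ofMatR (Matrix.of fun (w : Wd n (m + 1)) (v : Wd n m) =>
    if w 0 = j ∧ (fun i : Fin m => w i.succ) = v then 1 else 0)

/-- Right creation operator `x ↦ x ⊗ e_j`. -/
def rcreate (j : Fin n) (m : ℕ) : TP n m →L[ℂ] TP n (m + 1) :=
  ofMatR (Matrix.of fun (w : Wd n (m + 1)) (v : Wd n m) =>
    if w (Fin.last m) = j ∧ (fun i : Fin m => w i.castSucc) = v then 1 else 0)

/-- Graded component of the left shift `S_j : H_m → H_{m+1}`, `φ ↦ p_{m+1}(e_j ⊗ φ)`. -/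
def lsh (H : ∀ m, Submodule ℂ (TP n m)) (j : Fin n) (m : ℕ) : TP n m →L[ℂ] TP n (m + 1) :=
  prj H (m + 1) ∘L lcreate j m ∘L prj H m

/-- Graded component of the right shift `R_j : H_m → H_{m+1}`, `φ ↦ p_{m+1}(φ ⊗ e_j)`. -/
def rsh (H : ∀ m, Submodule ℂ (TP n m)) (j : Fin n) (m : ℕ) : TP n m →L[ℂ] TP n (m + 1) :=
  prj H (m + 1) ∘L rcreate j m ∘L prj H m

/-- Iterated left shift `S_r = S_{r_1} ⋯ S_{r_d}` as a map `H_m → H_{m+d}`. -/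
def lshW (H : ∀ m, Submodule ℂ (TP n m)) (m : ℕ) :
    ∀ d, Wd n d → (TP n m →L[ℂ] TP n (m + d))
  | 0, _ => ContinuousLinearMap.id ℂ _
  | d + 1, r => lsh H (r 0) (m + d) ∘L lshW H m d (Fin.tail r)

/-- Iterated right shift `R_r = R_{r_1} ⋯ R_{r_d}` as a map `H_m → H_{m+d}`. -/
def rshW (H : ∀ m, Submodule ℂ (TP n m)) (m : ℕ) :
    ∀ d, Wd n d → (TP n m →L[ℂ] TP n (m + d))
  | 0, _ => ContinuousLinearMap.id ℂ _
  | d + 1, r => rsh H (r (Fin.last d)) (m + d) ∘L rshW H m d (Fin.init r)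

/-- Canonical unitary identification `H^{⊗a} = H^{⊗b}` for `a = b`. -/
def castTP {a b : ℕ} (h : a = b) : TP n a →L[ℂ] TP n b :=
  ofMatR (Matrix.of fun (w : Wd n b) (v : Wd n a) =>
    if (fun i => w (Fin.cast h i)) = v then 1 else 0)

/-- `S_s : H_m → H_l` for a word `s` of length `l - m`. -/
def lshWTo (H : ∀ m, Submodule ℂ (TP n m)) (m l : ℕ) (h : m ≤ l) (s : Wd n (l - m)) :
    TP n m →L[ℂ] TP n l :=
  castTP (by omega : m + (l - m) = l) ∘L lshW H m (l - m) s

/-- `R_r : H_m → H_l` for a word `r` of length `l - m`. -/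
def rshWTo (H : ∀ m, Submodule ℂ (TP n m)) (m l : ℕ) (h : m ≤ l) (r : Wd n (l - m)) :
    TP n m →L[ℂ] TP n l :=
  castTP (by omega : m + (l - m) = l) ∘L rshW H m (l - m) r

/-- Extension of an operator on `H_m` by zero to `H^{⊗m}`. -/
def extOp (H : ∀ m, Submodule ℂ (TP n m)) {m : ℕ} (A : ↥(H m) →L[ℂ] ↥(H m)) :
    TP n m →L[ℂ] TP n m :=
  (H m).subtypeL ∘L A ∘L (H m).orthogonalProjectionOnto

/-- Compression of an operator on `H^{⊗m}` to `H_m`. -/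
def cmpOp (H : ∀ m, Submodule ℂ (TP n m)) {m : ℕ} (T : TP n m →L[ℂ] TP n m) :
    ↥(H m) →L[ℂ] ↥(H m) :=
  (H m).orthogonalProjectionOnto ∘L T ∘L (H m).subtypeL

def tk {m l : ℕ} (h : m ≤ l) (w : Wd n l) : Wd n m := fun i => w (Fin.castLE h i)
def dr (m : ℕ) {l : ℕ} (w : Wd n l) : Wd n (l - m) :=
  fun i => w ⟨m + i.1, by have := i.isLt; omega⟩

/-- `A ⊗ B` on `H^{⊗l} = H^{⊗m} ⊗ H^{⊗(l-m)}`. -/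
def opTG {m l : ℕ} (h : m ≤ l) (A : TP n m →L[ℂ] TP n m)
    (B : TP n (l - m) →L[ℂ] TP n (l - m)) : TP n l →L[ℂ] TP n l :=
  ofMatR (Matrix.of fun w v => ent A (tk h w) (tk h v) * ent B (dr m w) (dr m v))

/-- The inductive-system map `ι_{m,l}(A) = p_l (A ⊗ 1) p_l : B(H_m) → B(H_l)`. -/
def iota (H : ∀ m, Submodule ℂ (TP n m)) {m l : ℕ} (h : m ≤ l)
    (A : ↥(H m) →L[ℂ] ↥(H m)) : ↥(H l) →L[ℂ] ↥(H l) :=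
  cmpOp H (opTG h (extOp H A) (ContinuousLinearMap.id ℂ (TP n (l - m))))

/-- The chirality-flipped inductive map `ῑ_{m,l}(A) = Σ_{|s|=l-m} S_s A S_s^* |_{H_l}`. -/
def iotabar (H : ∀ m, Submodule ℂ (TP n m)) {m l : ℕ} (h : m ≤ l)
    (A : ↥(H m) →L[ℂ] ↥(H m)) : ↥(H l) →L[ℂ] ↥(H l) :=
  cmpOp H (∑ s : Wd n (l - m),
    lshWTo H m l h s ∘L extOp H A ∘L ContinuousLinearMap.adjoint (lshWTo H m l h s))

/-- The word `j` of length one. -/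
def letter (j : Fin n) : Wd n 1 := fun _ => j

/-- `Q^{⊗m}` on `H^{⊗m}`. -/
def tpow (Q : TP n 1 →L[ℂ] TP n 1) (m : ℕ) : TP n m →L[ℂ] TP n m :=
  ofMatR (Matrix.of fun w v => ∏ i : Fin m, ent Q (letter (w i)) (letter (v i)))

/-- Diagonal entry `(Q^{⊗d})_{r,r}`. -/
def Qdg (Q : TP n 1 →L[ℂ] TP n 1) {d : ℕ} (r : Wd n d) : ℂ :=
  ∏ i, ent Q (letter (r i)) (letter (r i))

/-- Trace of an operator. -/
def trOp {E : Type*} [NormedAddCommGroup E] [Module ℂ E] (A : E →L[ℂ] E) : ℂ :=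
  LinearMap.trace ℂ E A.toLinearMap

/-- `Tr(Q_m)` where `Q_m = p_m Q^{⊗m} p_m ∈ B(H_m)`. -/
def trQ (H : ∀ m, Submodule ℂ (TP n m)) (Q : TP n 1 →L[ℂ] TP n 1) (m : ℕ) : ℂ :=
  trOp (cmpOp H (tpow Q m))

/-- The state `φ_m(A) = Tr(ρ^{(m)} A)`, `ρ^{(m)} = Q_m / Tr(Q_m)`. -/
def phiSt (H : ∀ m, Submodule ℂ (TP n m)) (Q : TP n 1 →L[ℂ] TP n 1) (m : ℕ)
    (A : ↥(H m) →L[ℂ] ↥(H m)) : ℂ :=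
  trOp (cmpOp H (tpow Q m) ∘L A) / trQ H Q m

/-- The projective-system map
`j_{l,m}(A) = (Tr Q_m / Tr Q_l) Σ_{|r|=l-m} (Q^{⊗(l-m)})_{r,r} R_r^* A R_r |_{H_m}`. -/
def jmap (H : ∀ m, Submodule ℂ (TP n m)) (Q : TP n 1 →L[ℂ] TP n 1) {m l : ℕ} (h : m ≤ l)
    (A : ↥(H l) →L[ℂ] ↥(H l)) : ↥(H m) →L[ℂ] ↥(H m) :=
  (trQ H Q m / trQ H Q l) • cmpOp H (∑ r : Wd n (l - m),
    Qdg Q r • (ContinuousLinearMap.adjoint (rshWTo H m l h r) ∘L extOp H A ∘L rshWTo H m l h r))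

/-- `ρ^{(m)} = Q_m / Tr(Q_m)`, extended by zero to `H^{⊗m}`. -/
def rhoExt (H : ∀ m, Submodule ℂ (TP n m)) (Q : TP n 1 →L[ℂ] TP n 1) (m : ℕ) :
    TP n m →L[ℂ] TP n m :=
  (trQ H Q m)⁻¹ • (prj H m ∘L tpow Q m ∘L prj H m)

/-- The normalization constant `√(Tr(Q_m)Tr(Q_k)/Tr(Q_{m+k}))`. -/
def lamC (H : ∀ m, Submodule ℂ (TP n m)) (Q : TP n 1 →L[ℂ] TP n 1) (m k : ℕ) : ℂ :=
  (trQ H Q m * trQ H Q k / trQ H Q (m + k)) ^ ((1 : ℂ) / 2)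

/-- Right tensoring `x ↦ x ⊗ y` as a continuous linear map. -/
def tensR {m k : ℕ} (y : TP n k) : TP n m →L[ℂ] TP n (m + k) :=
  ofMatR (Matrix.of fun w v => if wfst w = v then y (wsnd w) else 0)

/-- The map `V_{m,l} ψ = √(TrQ_m TrQ_{l-m}/TrQ_l) Σ_{|r|=l-m} p_l (R_r^* ψ ⊗ e_r)`,
realized as an operator on `H^{⊗(m+k)}` (with `l = m + k`). -/
def Vml (H : ∀ m, Submodule ℂ (TP n m)) (Q : TP n 1 →L[ℂ] TP n 1) (m k : ℕ) :
    TP n (m + k) →L[ℂ] TP n (m + k) :=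
  lamC H Q m k • ∑ r : Wd n k,
    prj H (m + k) ∘L tensR (EuclideanSpace.single r 1) ∘L
      ContinuousLinearMap.adjoint (rshW H m k r)

/-- The claimed adjoint `V_{m,l}^* = √(⋯) (ρ^{(l)})^{-1}(ρ^{(m)} ⊗ ρ^{(l-m)})`. -/
def VmlStar (H : ∀ m, Submodule ℂ (TP n m)) (Q : TP n 1 →L[ℂ] TP n 1) (m k : ℕ) :
    TP n (m + k) →L[ℂ] TP n (m + k) :=
  lamC H Q m k •
    (extOp H (trQ H Q (m + k) • Ring.inverse (cmpOp H (tpow Q (m + k)))) ∘L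
      opT (rhoExt H Q m) (rhoExt H Q k))

/-- The adjoint, with instances supplied explicitly. -/
def adjC {E F : Type*} [NormedAddCommGroup E] [NormedAddCommGroup F]
    [InnerProductSpace ℂ E] [InnerProductSpace ℂ F] [CompleteSpace E] [CompleteSpace F]
    (T : E →L[ℂ] F) : F →L[ℂ] E :=
  @ContinuousLinearMap.adjoint ℂ E F _ _ _ _ _ _ _ T

/-- Complete positivity of a map between operator algebras on Hilbert spaces:
positive matrices over the domain are sent to positive matrices over the codomain.
(Here `Nᴴ` is written as the transpose of the entrywise adjoint.) -/
def IsCP {E F' : Type*} [NormedAddCommGroup E] [InnerProductSpace ℂ E] [CompleteSpace E]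
    [NormedAddCommGroup F'] [InnerProductSpace ℂ F'] [CompleteSpace F']
    (Φ : (E →L[ℂ] E) → (F' →L[ℂ] F')) : Prop :=
  ∀ (d : ℕ) (M : Matrix (Fin d) (Fin d) (E →L[ℂ] E)),
    (∃ N : Matrix (Fin d) (Fin d) (E →L[ℂ] E), M = (N.map fun T => adjC T)ᵀ * N) →
    ∃ N' : Matrix (Fin d) (Fin d) (F' →L[ℂ] F'), M.map Φ = (N'.map fun T => adjC T)ᵀ * N'

/-- The vacuum vector `Ω ∈ H^{⊗0} = ℂ`. -/
def vac (n : ℕ) : TP n 0 := EuclideanSpace.single default 1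

/-- The symmetric subspace `H^{∨m} ⊆ H^{⊗m}`. -/
def symSub (n m : ℕ) : Submodule ℂ (TP n m) where
  carrier := {x | ∀ (σ : Equiv.Perm (Fin m)) (w : Wd n m), x (w ∘ σ) = x w}
  add_mem' := by
    intro a b ha hb σ w
    show (a + b) (w ∘ σ) = (a + b) w
    simp only [PiLp.add_apply, ha σ w, hb σ w]
  zero_mem' := by
    intro σ w
    show (0 : TP n m) (w ∘ σ) = (0 : TP n m) w
    simp
  smul_mem' := by
    intro c x hx σ w
    show (c • x) (w ∘ σ) = (c • x) w
    simp only [PiLp.smul_apply, hx σ w]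

/-- Rank-one operator `|x⟩⟨x|`. -/
def rankOne {F : Type*} [NormedAddCommGroup F] [InnerProductSpace ℂ F] (x : F) :
    F →L[ℂ] F :=
  (innerSL ℂ x).smulRight x

end

noncomputable section AuxStmt8

open ContinuousLinearMap
open scoped ComplexInnerProductSpace

variable {n : ℕ}

lemma ofMatR_apply' {ι κ : Type} [Fintype ι] [Fintype κ] [DecidableEq ι] [DecidableEq κ]
    (M : Matrix ι κ ℂ) (x : EuclideanSpace ℂ κ) (w : ι) :
    ofMatR M x w = ∑ v, M w v * x v := by
  simp [ofMatR, Matrix.toEuclideanLin_apply, Matrix.mulVec, dotProduct]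

lemma sum_single_eq' {ι : Type} [Fintype ι] [DecidableEq ι] (x : EuclideanSpace ℂ ι) :
    ∑ v, x v • EuclideanSpace.single v (1 : ℂ) = x := by
  refine PiLp.ext fun w => ?_
  have h : (∑ v, x v • EuclideanSpace.single v (1 : ℂ)) w
      = ∑ v, (x v • EuclideanSpace.single v (1 : ℂ)) w := by
      rw [WithLp.ofLp_sum]; exact Finset.sum_apply w _ _
  rw [h]
  simp [EuclideanSpace.single_apply]

lemma clm_apply_eq_sum {a : ℕ} (A : TP n a →L[ℂ] TP n a) (x : TP n a) (w : Wd n a) :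
    A x w = ∑ v, ent A w v * x v := by
  have h : A x = ∑ v, x v • A (EuclideanSpace.single v 1) := by
    conv_lhs => rw [← sum_single_eq' x]
    rw [map_sum]
    exact Finset.sum_congr rfl fun v _ => map_smul A _ _
  rw [h]
  have h2 : (∑ v, x v • A (EuclideanSpace.single v 1)) w
      = ∑ v, (x v • A (EuclideanSpace.single v 1)) w := by
      rw [WithLp.ofLp_sum]; exact Finset.sum_apply w _ _
  rw [h2]
  exact Finset.sum_congr rfl fun v _ => mul_comm _ _

lemma ent_ofMatR {a : ℕ} (M : Matrix (Wd n a) (Wd n a) ℂ) (w v : Wd n a) :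
    ent (ofMatR M) w v = M w v := by
  rw [ent, ofMatR_apply']
  simp [EuclideanSpace.single_apply]

lemma clm_ext_ent {a : ℕ} {A B : TP n a →L[ℂ] TP n a}
    (h : ∀ w v, ent A w v = ent B w v) : A = B := by
  refine ContinuousLinearMap.ext fun x => PiLp.ext fun w => ?_
  rw [clm_apply_eq_sum, clm_apply_eq_sum]
  exact Finset.sum_congr rfl fun v _ => by rw [h]

lemma ent_comp {a : ℕ} (A B : TP n a →L[ℂ] TP n a) (w v : Wd n a) :
    ent (A ∘L B) w v = ∑ u, ent A w u * ent B u v := by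
  rw [ent, ContinuousLinearMap.comp_apply, clm_apply_eq_sum]
  rfl

lemma ent_one' {a : ℕ} (w v : Wd n a) :
    ent (1 : TP n a →L[ℂ] TP n a) w v = if w = v then 1 else 0 := by
  rw [ent, ContinuousLinearMap.one_apply]
  simp [EuclideanSpace.single_apply]

def wdEquiv (n m k : ℕ) : Wd n (m + k) ≃ Wd n m × Wd n k where
  toFun w := (wfst w, wsnd w)
  invFun p := Fin.addCases p.1 p.2
  left_inv w := by
    funext i
    refine Fin.addCases (fun j => ?_) (fun j => ?_) i
    · show Fin.addCases (wfst w) (wsnd w) (Fin.castAdd k j) = w (Fin.castAdd k j)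
      rw [Fin.addCases_left]; rfl
    · show Fin.addCases (wfst w) (wsnd w) (Fin.natAdd m j) = w (Fin.natAdd m j)
      rw [Fin.addCases_right]; rfl
  right_inv p := by
    refine Prod.ext (funext fun i => ?_) (funext fun i => ?_)
    · show Fin.addCases p.1 p.2 (Fin.castAdd k i) = p.1 i
      rw [Fin.addCases_left]
    · show Fin.addCases p.1 p.2 (Fin.natAdd m i) = p.2 i
      rw [Fin.addCases_right]

lemma sum_wd_split {m k : ℕ} (f : Wd n m → ℂ) (g : Wd n k → ℂ) :
    ∑ w : Wd n (m + k), f (wfst w) * g (wsnd w) = (∑ a, f a) * (∑ b, g b) := by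
  calc ∑ w : Wd n (m + k), f (wfst w) * g (wsnd w)
      = ∑ p : Wd n m × Wd n k, f p.1 * g p.2 :=
        Fintype.sum_equiv (wdEquiv n m k) _ _ (fun w => rfl)
    _ = (∑ a, f a) * (∑ b, g b) := by
        rw [Fintype.sum_mul_sum, Fintype.sum_prod_type]

lemma opT_tmul {m k : ℕ} (A : TP n m →L[ℂ] TP n m) (B : TP n k →L[ℂ] TP n k)
    (x : TP n m) (y : TP n k) : opT A B (tmul x y) = tmul (A x) (B y) := by
  refine PiLp.ext fun w => ?_
  have h1 : opT A B (tmul x y) w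
      = ∑ v, (ent A (wfst w) (wfst v) * x (wfst v)) * (ent B (wsnd w) (wsnd v) * y (wsnd v)) := by
    rw [opT, ofMatR_apply']
    refine Finset.sum_congr rfl fun v _ => ?_
    have h : tmul x y v = x (wfst v) * y (wsnd v) := rfl
    rw [Matrix.of_apply, h]; ring
  rw [h1, sum_wd_split (fun a => ent A (wfst w) a * x a) (fun b => ent B (wsnd w) b * y b)]
  have h2 : tmul (A x) (B y) w = (A x) (wfst w) * (B y) (wsnd w) := rfl
  rw [h2, clm_apply_eq_sum, clm_apply_eq_sum]

lemma opT_tpow (Q : TP n 1 →L[ℂ] TP n 1) (m k : ℕ) :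
    opT (tpow Q m) (tpow Q k) = tpow Q (m + k) := by
  refine clm_ext_ent fun w v => ?_
  rw [opT, ent_ofMatR, Matrix.of_apply, tpow, tpow, tpow, ent_ofMatR, ent_ofMatR, ent_ofMatR,
    Matrix.of_apply, Matrix.of_apply, Matrix.of_apply, Fin.prod_univ_add]
  rfl

lemma letter_default (u : Wd n 1) : letter (u 0) = u :=
  funext fun i => congrArg u (Subsingleton.elim 0 i)

lemma ent_comp_one (A B : TP n 1 →L[ℂ] TP n 1) (p q : Wd n 1) :
    ent (A ∘L B) p q = ∑ t : Fin n, ent A p (letter t) * ent B (letter t) q := by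
  rw [ent_comp]
  refine Fintype.sum_equiv (Equiv.funUnique (Fin 1) (Fin n)) _ _ (fun u => ?_)
  have h : letter (Equiv.funUnique (Fin 1) (Fin n) u) = u := letter_default u
  rw [h]

lemma tpow_comp (A B : TP n 1 →L[ℂ] TP n 1) (l : ℕ) :
    tpow A l ∘L tpow B l = tpow (A ∘L B) l := by
  refine clm_ext_ent fun w v => ?_
  rw [ent_comp]
  conv_rhs => rw [tpow, ent_ofMatR, Matrix.of_apply]
  simp_rw [ent_comp_one]
  rw [Fintype.prod_sum]
  refine Finset.sum_congr rfl fun u _ => ?_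
  rw [tpow, tpow, ent_ofMatR, ent_ofMatR, Matrix.of_apply, Matrix.of_apply,
    ← Finset.prod_mul_distrib]

lemma tpow_id (l : ℕ) : tpow (1 : TP n 1 →L[ℂ] TP n 1) l = 1 := by
  refine clm_ext_ent fun w v => ?_
  rw [tpow, ent_ofMatR, Matrix.of_apply, ent_one']
  have h : ∀ i : Fin l,
      ent (1 : TP n 1 →L[ℂ] TP n 1) (letter (w i)) (letter (v i))
        = if w i = v i then (1 : ℂ) else 0 := by
    intro i
    rw [ent_one']
    by_cases h : w i = v i
    · rw [if_pos (by rw [h]), if_pos h]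
    · rw [if_neg (fun hc => h (congrFun hc 0)), if_neg h]
  simp_rw [h]
  by_cases h : w = v
  · subst h; simp
  · rw [if_neg h]
    obtain ⟨i, hi⟩ : ∃ i, w i ≠ v i := by
      by_contra hc; push_neg at hc; exact h (funext hc)
    exact Finset.prod_eq_zero (Finset.mem_univ i) (if_neg hi)

lemma adjoint_ofMatR {ι : Type} [Fintype ι] [DecidableEq ι] (M : Matrix ι ι ℂ) :
    ContinuousLinearMap.adjoint (ofMatR M) = ofMatR Mᴴ := by
  refine (((ContinuousLinearMap.eq_adjoint_iff (ofMatR Mᴴ) (ofMatR M)).mpr fun x y => ?_)).symm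
  have hx : ∀ (N : Matrix ι ι ℂ) (z : EuclideanSpace ℂ ι) (w : ι),
      ofMatR N z w = ∑ v, N w v * z v := fun N z w => ofMatR_apply' N z w
  simp only [PiLp.inner_apply, RCLike.inner_apply']
  have hL : ∀ w, (starRingEnd ℂ) (ofMatR Mᴴ x w) * y w
      = ∑ v, M v w * ((starRingEnd ℂ) (x v) * y w) := by
    intro w
    rw [ofMatR_apply', map_sum, Finset.sum_mul]
    refine Finset.sum_congr rfl fun v _ => ?_
    rw [map_mul, Matrix.conjTranspose_apply,
      show (star (M v w) : ℂ) = (starRingEnd ℂ) (M v w) from rfl, starRingEnd_self_apply]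
    ring
  have hR : ∀ v, (starRingEnd ℂ) (x v) * (ofMatR M y v)
      = ∑ w, M v w * ((starRingEnd ℂ) (x v) * y w) := by
    intro v
    rw [ofMatR_apply', Finset.mul_sum]
    refine Finset.sum_congr rfl fun w _ => ?_
    ring
  simp_rw [hL, hR]
  exact Finset.sum_comm

lemma ent_conj {Q : TP n 1 →L[ℂ] TP n 1} (hQ : IsSelfAdjoint Q) (a b : Wd n 1) :
    (starRingEnd ℂ) (ent Q a b) = ent Q b a := by
  have h1 : ent Q a b = ⟪(EuclideanSpace.single a (1 : ℂ)), Q (EuclideanSpace.single b 1)⟫ := by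
    rw [EuclideanSpace.inner_single_left]; simp [ent]
  have h2 : ent Q b a = ⟪(EuclideanSpace.single b (1 : ℂ)), Q (EuclideanSpace.single a 1)⟫ := by
    rw [EuclideanSpace.inner_single_left]; simp [ent]
  rw [h1, h2]
  calc (starRingEnd ℂ) ⟪(EuclideanSpace.single a (1 : ℂ)), Q (EuclideanSpace.single b 1)⟫
      = ⟪Q (EuclideanSpace.single b 1), EuclideanSpace.single a (1 : ℂ)⟫ :=
        inner_conj_symm _ _
    _ = ⟪(EuclideanSpace.single b (1 : ℂ)), Q (EuclideanSpace.single a 1)⟫ := by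
        conv_lhs => rw [← hQ.adjoint_eq]
        exact ContinuousLinearMap.adjoint_inner_left Q _ _

lemma tpow_selfAdjoint {Q : TP n 1 →L[ℂ] TP n 1} (hQ : IsSelfAdjoint Q) (l : ℕ) :
    ContinuousLinearMap.adjoint (tpow Q l) = tpow Q l := by
  rw [tpow, adjoint_ofMatR]
  congr 1
  ext w v
  simp only [Matrix.conjTranspose_apply, Matrix.of_apply]
  rw [show (star (∏ i : Fin l, ent Q (letter (v i)) (letter (w i))) : ℂ)
      = (starRingEnd ℂ) (∏ i : Fin l, ent Q (letter (v i)) (letter (w i))) from rfl,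
    map_prod]
  exact Finset.prod_congr rfl fun i _ => ent_conj hQ _ _

end AuxStmt8

/-- **Statement 8.** `Q_l⁻¹ p_l (Q_m ⊗ Q_{l−m}) = p_l` on `H_m ⊗ H_{l−m}`
(with `l = m + k`). -/
theorem stmt8 {n : ℕ} (H : ∀ m, Submodule ℂ (TP n m)) (hsp : IsSubproduct H)
    (Q : TP n 1 →L[ℂ] TP n 1) (hpos : Q.IsPositive) (hinv : IsUnit Q)
    (hpres : ∀ m, prj H m ∘L tpow Q m ∘L prj H m = tpow Q m ∘L prj H m)
    (m k : ℕ) (x : TP n (m + k)) (hx : x ∈ tensorSub (H m) (H k)) :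
    Ring.inverse (cmpOp H (tpow Q (m + k)))
        ((H (m + k)).orthogonalProjectionOnto
          (opT (prj H m ∘L tpow Q m ∘L prj H m) (prj H k ∘L tpow Q k ∘L prj H k) x)) =
      (H (m + k)).orthogonalProjectionOnto x := by
  classical
  have hQsa : IsSelfAdjoint Q := hpos.isSelfAdjoint
  set T := tpow Q (m + k) with hT
  set P := prj H (m + k) with hP
  set il := (H (m + k)).subtypeL with hil
  set oP := (H (m + k)).orthogonalProjectionOnto with hoP
  -- self-adjointness
  have hPsa : ContinuousLinearMap.adjoint P = P :=
    (isSelfAdjoint_starProjection (H (m + k))).adjoint_eq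
  have hTsa : ContinuousLinearMap.adjoint T = T := tpow_selfAdjoint hQsa (m + k)
  -- commutation P T = T P
  have hpresl : P ∘L T ∘L P = T ∘L P := hpres (m + k)
  have hcomm : P ∘L T = T ∘L P := by
    have h2 := congrArg ContinuousLinearMap.adjoint hpresl
    rw [ContinuousLinearMap.adjoint_comp, ContinuousLinearMap.adjoint_comp,
      hPsa, hTsa] at h2
    -- h2 : (P ∘L T) ∘L P = P ∘L T
    rw [← h2, ContinuousLinearMap.comp_assoc, hpresl]
  have hcommx : ∀ z, P (T z) = T (P z) := fun z => by
    have := congrArg (fun f => f z) hcomm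
    simpa using this
  -- inverse of Q
  obtain ⟨u, hu⟩ := hinv
  set Q' := ((u⁻¹ : (TP n 1 →L[ℂ] TP n 1)ˣ) : TP n 1 →L[ℂ] TP n 1) with hQ'
  have hQQ' : Q ∘L Q' = 1 := by
    rw [← ContinuousLinearMap.mul_def, ← hu]; exact u.mul_inv
  have hQ'Q : Q' ∘L Q = 1 := by
    rw [← ContinuousLinearMap.mul_def, ← hu]; exact u.inv_mul
  set T' := tpow Q' (m + k) with hT'
  have hTT' : T ∘L T' = 1 := by rw [hT, hT', tpow_comp, hQQ', tpow_id]
  have hT'T : T' ∘L T = 1 := by rw [hT, hT', tpow_comp, hQ'Q, tpow_id]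
  have hTT'x : ∀ z, T (T' z) = z := fun z => by
    have := congrArg (fun f => f z) hTT'
    simpa using this
  have hT'Tx : ∀ z, T' (T z) = z := fun z => by
    have := congrArg (fun f => f z) hT'T
    simpa using this
  have hcommx' : ∀ z, P (T' z) = T' (P z) := fun z => by
    have h1 : P (T' z) = T' (T (P (T' z))) := (hT'Tx _).symm
    rw [h1, ← hcommx, hTT'x]
  -- basic projection facts
  have hPmem : ∀ ξ : ↥(H (m + k)), P (↑ξ : TP n (m + k)) = ↑ξ := fun ξ => by
    have h0 : oP (↑ξ : TP n (m + k)) = ξ := Submodule.orthogonalProjectionOnto_mem_subspace_eq_self ξ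
    show (il : _ →L[ℂ] _) (oP (↑ξ : TP n (m + k))) = ↑ξ
    rw [h0]
    rfl
  have hPapp : ∀ z : TP n (m + k), P z = ↑(oP z) := fun z => rfl
  -- the two compressions are mutually inverse
  have hABx : ∀ ξ : ↥(H (m + k)), cmpOp H T (cmpOp H T' ξ) = ξ := fun ξ => by
    show oP (T (P (T' (↑ξ : TP n (m + k))))) = ξ
    rw [hcommx', hPmem, hTT'x]
    exact Submodule.orthogonalProjectionOnto_mem_subspace_eq_self ξ
  have hBAx : ∀ ξ : ↥(H (m + k)), cmpOp H T' (cmpOp H T ξ) = ξ := fun ξ => by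
    show oP (T' (P (T (↑ξ : TP n (m + k))))) = ξ
    rw [hcommx, hPmem, hT'Tx]
    exact Submodule.orthogonalProjectionOnto_mem_subspace_eq_self ξ
  have hAB : cmpOp H T * cmpOp H T' = 1 := ContinuousLinearMap.ext hABx
  have hBA : cmpOp H T' * cmpOp H T = 1 := ContinuousLinearMap.ext hBAx
  have hu2 : IsUnit (cmpOp H T) := ⟨⟨cmpOp H T, cmpOp H T', hAB, hBA⟩, rfl⟩
  -- Step 1 : (Q_m ⊗ Q_k) x = Q^{⊗(m+k)} x on H_m ⊗ H_k
  have step1 : opT (prj H m ∘L tpow Q m ∘L prj H m) (prj H k ∘L tpow Q k ∘L prj H k) x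
      = T x := by
    rw [hpres m, hpres k]
    refine Submodule.span_induction
      (p := fun z _ => opT (tpow Q m ∘L prj H m) (tpow Q k ∘L prj H k) z = T z)
      ?_ ?_ ?_ ?_ hx
    · rintro z ⟨a, ha, b, hb, rfl⟩
      rw [opT_tmul]
      have hpa : prj H m a = a := by
        show ((H m).subtypeL : _ →L[ℂ] _) ((H m).orthogonalProjectionOnto a) = a
        exact Submodule.starProjection_eq_self_iff.mpr ha
      have hpb : prj H k b = b := by
        show ((H k).subtypeL : _ →L[ℂ] _) ((H k).orthogonalProjectionOnto b) = b
        exact Submodule.starProjection_eq_self_iff.mpr hb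
      rw [ContinuousLinearMap.comp_apply, hpa, ContinuousLinearMap.comp_apply, hpb,
        ← opT_tmul (tpow Q m) (tpow Q k), opT_tpow]
    · simp
    · intro y z _ _ hy hz
      rw [map_add, map_add, hy, hz]
    · intro c z _ hz
      rw [map_smul, map_smul, hz]
  -- Step 2 : oP (T x) = cmpOp H T (oP x)
  have hker : ∀ z : TP n (m + k), P z = 0 → oP z = 0 := fun z h => by
    have : (↑(oP z) : TP n (m + k)) = 0 := by rw [← hPapp]; exact h
    exact Subtype.ext this
  have step2 : oP (T x) = cmpOp H T (oP x) := by
    have hz : oP (T (x - P x)) = 0 := by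
      refine hker _ ?_
      rw [hcommx, map_sub]
      have : P (P x) = P x := by rw [hPapp x]; exact hPmem _
      rw [this, sub_self, map_zero]
    have hsplit : oP (T x) - oP (T (P x)) = 0 := by
      rw [← map_sub, ← map_sub]; exact hz
    have h3 : oP (T x) = oP (T (P x)) := by
      have := sub_eq_zero.mp hsplit; exact this
    rw [h3]
    rfl
  rw [step1, step2]
  have hcancel : Ring.inverse (cmpOp H T) * cmpOp H T = 1 := Ring.inverse_mul_cancel _ hu2
  calc Ring.inverse (cmpOp H T) (cmpOp H T (oP x))
      = (Ring.inverse (cmpOp H T) * cmpOp H T) (oP x) := rfl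
    _ = oP x := by rw [hcancel]; rfl
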